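/- Let w : [0,1] → [0,1] be continuous and strictly increasing, and let v : [0,1] → ℝ≥0 be integrable with v(x) ≥ v_min > 0. Then the maximum over Borel sets S ⊆ [0,1] of the expected revenue r(S) = (∫_S v(x)w(x) dx)/(1 + ∫_S v(x) dx) is attained by a set of the form [y,1] for some y ∈ [0,1]; equivalently, max_S r(S) = max_{ρ∈[0,1]} r([w⁻¹(ρ),1]), where w⁻¹(ρ) = min{x ∈ [0,1] : w(x) ≥ ρ}. -/

import Mathlib

open MeasureTheory Set

theorem stmt0 (w v : ℝ → ℝ) (vmin : ℝ)
    (hw_cont : ContinuousOn w (Icc 0 1))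
    (hw_mono : StrictMonoOn w (Icc 0 1))
    (hw_range : ∀ x ∈ Icc (0:ℝ) 1, w x ∈ Icc (0:ℝ) 1)
    (hv_int : IntegrableOn v (Icc 0 1))
    (hvmin : 0 < vmin)
    (hv_lb : ∀ x ∈ Icc (0:ℝ) 1, vmin ≤ v x) :
    ∃ y ∈ Icc (0:ℝ) 1, ∀ S : Set ℝ, MeasurableSet S → S ⊆ Icc 0 1 →
      (∫ x in S, v x * w x) / (1 + ∫ x in S, v x) ≤
        (∫ x in Icc y 1, v x * w x) / (1 + ∫ x in Icc y 1, v x) := by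
  have hI : MeasurableSet (Icc (0:ℝ) 1) := measurableSet_Icc
  set I : Set ℝ := Icc 0 1 with hIdef
  -- measurability of w on I
  have hw_aem : AEMeasurable w (volume.restrict I) := hw_cont.aemeasurable hI
  have hv_aesm : AEStronglyMeasurable v (volume.restrict I) := hv_int.aestronglyMeasurable
  -- the auxiliary function m
  set m : ℝ → ℝ → ℝ := fun l x => max (w x - l) 0 with hmdef
  have hm_cont : ∀ l, ContinuousOn (m l) I := fun l x hx =>
    ((hw_cont x hx).sub continuousWithinAt_const).max continuousWithinAt_const
  have hm_aem : ∀ l, AEMeasurable (m l) (volume.restrict I) := fun l =>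
    (hm_cont l).aemeasurable hI
  have hm_nonneg : ∀ l x, 0 ≤ m l x := fun l x => le_max_right _ _
  have hv_nonneg : ∀ x ∈ I, 0 ≤ v x := fun x hx => le_trans hvmin.le (hv_lb x hx)
  -- integrability of v * m l on I
  have hint_vm : ∀ l : ℝ, IntegrableOn (fun x => v x * m l x) I := by
    intro l
    apply Integrable.mono' (((hv_int.norm).const_mul (1 + |l|)))
    · exact (hv_aesm.aemeasurable.mul (hm_aem l)).aestronglyMeasurable
    · filter_upwards [ae_restrict_mem hI] with x hx
      have h1 : m l x ≤ 1 + |l| := by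
        have := (hw_range x hx).2
        simp only [hmdef]
        have : w x - l ≤ 1 + |l| := by
          have := abs_nonneg l
          nlinarith [neg_abs_le l]
        exact max_le this (by positivity)
      calc ‖v x * m l x‖ = ‖v x‖ * m l x := by
            rw [norm_mul, Real.norm_of_nonneg (hm_nonneg l x)]
        _ ≤ ‖v x‖ * (1 + |l|) := by
            apply mul_le_mul_of_nonneg_left h1 (norm_nonneg _)
        _ = (1 + |l|) * ‖v x‖ := mul_comm _ _
  -- integrability of v * w on I
  have hint_vw : IntegrableOn (fun x => v x * w x) I := by
    apply Integrable.mono' hv_int.norm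
    · exact (hv_aesm.aemeasurable.mul hw_aem).aestronglyMeasurable
    · filter_upwards [ae_restrict_mem hI] with x hx
      have h0 := (hw_range x hx).1
      have h1 := (hw_range x hx).2
      rw [norm_mul]
      have : ‖w x‖ ≤ 1 := by rw [Real.norm_of_nonneg h0]; exact h1
      calc ‖v x‖ * ‖w x‖ ≤ ‖v x‖ * 1 := mul_le_mul_of_nonneg_left this (norm_nonneg _)
        _ = ‖v x‖ := mul_one _
  -- the function g
  set g : ℝ → ℝ := fun l => ∫ x in I, v x * m l x with hgdef
  -- Lipschitz bound for g
  have hK : (0:ℝ) ≤ ∫ x in I, ‖v x‖ := integral_nonneg fun x => norm_nonneg _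
  have hg_lip : ∀ a b : ℝ, |g a - g b| ≤ (∫ x in I, ‖v x‖) * |a - b| := by
    intro a b
    have hsub : g a - g b = ∫ x in I, (v x * m a x - v x * m b x) :=
      (integral_sub (hint_vm a) (hint_vm b)).symm
    rw [hsub]
    calc |∫ x in I, (v x * m a x - v x * m b x)|
        ≤ ∫ x in I, ‖v x * m a x - v x * m b x‖ := by
          rw [← Real.norm_eq_abs]
          exact norm_integral_le_integral_norm _
      _ ≤ ∫ x in I, ‖v x‖ * |a - b| := by
          apply setIntegral_mono_on
            (((hint_vm a).sub (hint_vm b)).norm) (hv_int.norm.mul_const _) hI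
          intro x hx
          have : m a x - m b x ≤ |a - b| := by
            simp only [hmdef]
            rcases le_max_iff.mp (le_refl (max (w x - a) 0)) with _ | _ <;>
            · rcases max_cases (w x - a) 0 with ⟨h1, h2⟩ | ⟨h1, h2⟩ <;>
              rcases max_cases (w x - b) 0 with ⟨h3, h4⟩ | ⟨h3, h4⟩ <;>
              rw [h1, h3] <;> cases abs_cases (a - b) <;> linarith
          have : |m a x - m b x| ≤ |a - b| := by
            rcases abs_cases (m a x - m b x) with ⟨h1, _⟩ | ⟨h1, _⟩
            · rw [h1]; exact this
            · rw [h1]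
              have : m b x - m a x ≤ |b - a| := by
                simp only [hmdef]
                rcases max_cases (w x - a) 0 with ⟨h1, h2⟩ | ⟨h1, h2⟩ <;>
                rcases max_cases (w x - b) 0 with ⟨h3, h4⟩ | ⟨h3, h4⟩ <;>
                rw [h1, h3] <;> cases abs_cases (b - a) <;> linarith
              rw [abs_sub_comm] at this; linarith
          calc ‖v x * m a x - v x * m b x‖ = ‖v x‖ * |m a x - m b x| := by
                rw [← mul_sub, norm_mul]; rfl
            _ ≤ ‖v x‖ * |a - b| := mul_le_mul_of_nonneg_left this (norm_nonneg _)
      _ = (∫ x in I, ‖v x‖) * |a - b| := by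
          rw [integral_mul_const]
  have hg_cont : Continuous g := by
    have := LipschitzWith.of_dist_le_mul (K := Real.toNNReal (∫ x in I, ‖v x‖)) (f := g)
      (fun a b => by
        rw [Real.dist_eq, Real.dist_eq, Real.coe_toNNReal _ hK]
        exact hg_lip a b)
    exact this.continuous
  -- g 1 = 0
  have hg1 : g 1 = 0 := by
    show ∫ x in I, v x * m 1 x = 0
    rw [setIntegral_congr_fun hI (g := fun _ => (0:ℝ))]
    · simp
    · intro x hx
      have := (hw_range x hx).2
      simp only [hmdef]
      have : w x - 1 ≤ 0 := by linarith
      simp [max_eq_right this]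
  -- g 0 ≥ 0
  have hg0 : 0 ≤ g 0 := by
    apply setIntegral_nonneg hI
    intro x hx
    exact mul_nonneg (hv_nonneg x hx) (hm_nonneg 0 x)
  -- fixed point via IVT
  obtain ⟨l, hlI, hl⟩ : ∃ l ∈ Icc (0:ℝ) 1, g l - l = 0 := by
    have h01 : (0:ℝ) ≤ 1 := zero_le_one
    have hc : ContinuousOn (fun l => g l - l) (Icc 0 1) :=
      (hg_cont.sub continuous_id).continuousOn
    have := intermediate_value_Icc' h01 hc
    have h0mem : (0:ℝ) ∈ Icc ((fun l => g l - l) 1) ((fun l => g l - l) 0) := by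
      constructor
      · simp [hg1]
      · simpa using hg0
    obtain ⟨l, hlI, hl⟩ := this h0mem
    exact ⟨l, hlI, hl⟩
  have hgl : g l = l := by linarith [hl]
  have hl0 : 0 ≤ l := hlI.1
  have hl1 : l ≤ 1 := hlI.2
  -- the threshold set T
  set T : Set ℝ := {x ∈ I | l ≤ w x} with hTdef
  have hT_closed : IsClosed T := by
    have : T = I ∩ w ⁻¹' (Ici l) := by
      ext x; simp [hTdef, hIdef]
    rw [this]
    exact hw_cont.preimage_isClosed_of_isClosed isClosed_Icc isClosed_Ici
  have h1T : (1:ℝ) ∈ T := by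
    refine ⟨right_mem_Icc.mpr zero_le_one, ?_⟩
    by_contra hcon
    push_neg at hcon
    -- then m l = 0 on I, so g l = 0, so l = 0, contradicting w 1 < l and w 1 ≥ 0
    have hw1 : ∀ x ∈ I, w x < l := by
      intro x hx
      rcases eq_or_lt_of_le hx.2 with h | h
      · rw [h]; exact hcon
      · exact lt_of_le_of_lt (le_of_lt (hw_mono hx (right_mem_Icc.mpr zero_le_one) h)) hcon
    have : g l = 0 := by
      show ∫ x in I, v x * m l x = 0
      rw [setIntegral_congr_fun hI (g := fun _ => (0:ℝ))]
      · simp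
      · intro x hx
        have := hw1 x hx
        simp only [hmdef]
        have hmx : w x - l ≤ 0 := by linarith
        simp [max_eq_right hmx]
    rw [hgl] at this
    have h01 := (hw_range 1 (right_mem_Icc.mpr zero_le_one)).1
    linarith
  have hT_ne : T.Nonempty := ⟨1, h1T⟩
  have hT_bdd : BddBelow T := ⟨0, fun x hx => hx.1.1⟩
  set y : ℝ := sInf T with hydef
  have hyT : y ∈ T := hT_closed.csInf_mem hT_ne hT_bdd
  have hyI : y ∈ I := hyT.1
  have hylw : l ≤ w y := hyT.2
  -- T = Icc y 1
  have hT_eq : T = Icc y 1 := by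
    ext x
    constructor
    · intro hx
      exact ⟨csInf_le hT_bdd hx, hx.1.2⟩
    · intro hx
      have hxI : x ∈ I := ⟨le_trans hyI.1 hx.1, hx.2⟩
      refine ⟨hxI, ?_⟩
      rcases eq_or_lt_of_le hx.1 with h | h
      · rw [← h]; exact hylw
      · exact le_trans hylw (le_of_lt (hw_mono hyI hxI h))
  have hTsub : Icc y 1 ⊆ I := fun x hx => ⟨le_trans hyI.1 hx.1, hx.2⟩
  -- the key equality: integral of v*(w - l) over Icc y 1 equals l
  have hkey : ∫ x in Icc y 1, v x * (w x - l) = l := by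
    have h1 : ∫ x in Icc y 1, v x * (w x - l) = ∫ x in Icc y 1, v x * m l x := by
      apply setIntegral_congr_fun measurableSet_Icc
      intro x hx
      have : l ≤ w x := (hT_eq ▸ hx : x ∈ T).2
      simp only [hmdef]
      rw [max_eq_left (by linarith)]
    have h2 : ∫ x in I, v x * m l x = ∫ x in Icc y 1, v x * m l x := by
      apply setIntegral_eq_of_subset_of_ae_diff_eq_zero hI.nullMeasurableSet hTsub
      filter_upwards with x hx
      have hxI : x ∈ I := hx.1
      have hxnT : x ∉ T := by rw [hT_eq]; exact hx.2
      have : w x < l := by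
        by_contra hcon
        push_neg at hcon
        exact hxnT ⟨hxI, hcon⟩
      simp only [hmdef]
      rw [max_eq_right (by linarith)]
      ring
    rw [h1, ← h2]
    exact hgl
  -- integrability on subsets
  have hSint : ∀ S : Set ℝ, S ⊆ I → IntegrableOn v S ∧ IntegrableOn (fun x => v x * w x) S ∧
      IntegrableOn (fun x => v x * m l x) S := fun S hS =>
    ⟨hv_int.mono_set hS, hint_vw.mono_set hS, (hint_vm l).mono_set hS⟩
  -- positivity of denominators
  have hden : ∀ S : Set ℝ, MeasurableSet S → S ⊆ I → 0 < 1 + ∫ x in S, v x := by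
    intro S hSm hS
    have : 0 ≤ ∫ x in S, v x :=
      setIntegral_nonneg hSm fun x hx => hv_nonneg x (hS hx)
    linarith
  refine ⟨y, hyI, ?_⟩
  intro S hSmeas hSsub
  have hdenS := hden S hSmeas hSsub
  have hdenT := hden (Icc y 1) measurableSet_Icc hTsub
  obtain ⟨hSA, hSB, hSC⟩ := hSint S hSsub
  obtain ⟨hTA, hTB, hTC⟩ := hSint (Icc y 1) hTsub
  have hSD : IntegrableOn (fun x => v x * (w x - l)) S := by
    have h := hSB.sub (hSA.mul_const l)
    simpa [mul_sub, Pi.sub_def] using h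
  have hTD : IntegrableOn (fun x => v x * (w x - l)) (Icc y 1) := by
    have h := hTB.sub (hTA.mul_const l)
    simpa [mul_sub, Pi.sub_def] using h
  -- split integrals
  have hsplitT : ∫ x in Icc y 1, v x * (w x - l)
      = (∫ x in Icc y 1, v x * w x) - l * ∫ x in Icc y 1, v x := by
    have h1 : ∫ x in Icc y 1, v x * (w x - l)
        = (∫ x in Icc y 1, v x * w x) - ∫ x in Icc y 1, v x * l := by
      rw [← integral_sub hTB (hTA.mul_const l)]
      apply setIntegral_congr_fun measurableSet_Icc
      intro x _
      ring
    rw [h1, integral_mul_const, mul_comm]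
  have hsplitS : ∫ x in S, v x * (w x - l)
      = (∫ x in S, v x * w x) - l * ∫ x in S, v x := by
    have h1 : ∫ x in S, v x * (w x - l)
        = (∫ x in S, v x * w x) - ∫ x in S, v x * l := by
      rw [← integral_sub hSB (hSA.mul_const l)]
      apply setIntegral_congr_fun hSmeas
      intro x _
      ring
    rw [h1, integral_mul_const, mul_comm]
  -- revenue of T equals l
  have hrT : (∫ x in Icc y 1, v x * w x) / (1 + ∫ x in Icc y 1, v x) = l := by
    rw [div_eq_iff (ne_of_gt hdenT)]
    have := hkey
    rw [hsplitT] at this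
    linarith [this]
  -- revenue of S at most l
  have hrS : (∫ x in S, v x * w x) / (1 + ∫ x in S, v x) ≤ l := by
    rw [div_le_iff₀ hdenS]
    have step1 : ∫ x in S, v x * (w x - l) ≤ ∫ x in S, v x * m l x := by
      apply setIntegral_mono_on hSD hSC hSmeas
      intro x hx
      exact mul_le_mul_of_nonneg_left (le_max_left _ _) (hv_nonneg x (hSsub hx))
    have step2 : ∫ x in S, v x * m l x ≤ ∫ x in I, v x * m l x := by
      apply setIntegral_mono_set (hint_vm l) ?_ (HasSubset.Subset.eventuallyLE hSsub)
      filter_upwards [ae_restrict_mem hI] with x hx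
      exact mul_nonneg (hv_nonneg x hx) (hm_nonneg l x)
    have : ∫ x in S, v x * (w x - l) ≤ l := by
      calc ∫ x in S, v x * (w x - l) ≤ ∫ x in S, v x * m l x := step1
        _ ≤ ∫ x in I, v x * m l x := step2
        _ = l := hgl
    rw [hsplitS] at this
    linarith
  rw [hrT]
  exact hrS
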